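/- Let D be a distribution on X × {0,1} with p = Pr_{(x,y)∼D}[y = 1], let F ⊆ {0,1}^X, and let f* ∈ F satisfy L(f*) = inf_{f∈F} L(f). Fix a bag size k ≥ 1, and for f ∈ F define the offset EasyLLP loss on a bag of k i.i.d. draws as g_f(B,α) = (k(2α − 2p) + (2p − 1))·((1/k)·Σ_{j=1}^k (f*(x_j) − f(x_j))), where α = (1/k)·Σ_j y_j. Then for every f ∈ F: E[g_f] = L(f) − L(f*) ≥ 0 and E[g_f²] ≤ 8·k²·L(f*) + 4·k²·E[g_f]. -/

import Mathlib

open MeasureTheory Finset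
open scoped ENNReal NNReal

noncomputable section

namespace LLP

/-- Real value of a Boolean label/prediction (`0` or `1`). -/
def bval (b : Bool) : ℝ := if b then 1 else 0

/-- Label proportion `α` of a bag of `k` labeled examples. -/
def labelProp {X : Type*} {k : ℕ} (bag : Fin k → X × Bool) : ℝ :=
  (∑ j, bval (bag j).2) / (k : ℝ)

/-- Average prediction `(1/k)·Σ_j f(x_j)` of `f` on a bag. -/
def predProp {X : Type*} {k : ℕ} (f : X → Bool) (bag : Fin k → X × Bool) : ℝ :=
  (∑ j, bval (f (bag j).1)) / (k : ℝ)

/-- Instance-level classification loss `L(f) = Pr_{(x,y)∼D}[f(x) ≠ y]`. -/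
def err {X : Type*} [MeasurableSpace X] (D : Measure (X × Bool)) (f : X → Bool) : ℝ :=
  (D {p | f p.1 ≠ p.2}).toReal

/-- `S` is shattered by the Boolean-valued class `F`. -/
def Shatters {Z : Type*} (F : Set (Z → Bool)) (S : Finset Z) : Prop :=
  ∀ T ⊆ S, ∃ f ∈ F, ∀ z ∈ S, (f z = true ↔ z ∈ T)

/-- The VC dimension of `F` is at most `d`. -/
def VCDimLE {Z : Type*} (F : Set (Z → Bool)) (d : ℕ) : Prop :=
  ∀ S : Finset Z, Shatters F S → S.card ≤ d

/-- Joint distribution of `n` i.i.d. bags, each consisting of `k` i.i.d. draws from `D`. -/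
def bagMeasure {X : Type*} [MeasurableSpace X] (D : Measure (X × Bool)) (n k : ℕ) :
    Measure (Fin n → Fin k → X × Bool) :=
  Measure.pi fun _ => Measure.pi fun _ => D

/-- Empirical proportional (0-1) risk: fraction of bags whose predicted proportion
mismatches the observed label proportion. -/
def empPM {X : Type*} {n k : ℕ} (f : X → Bool) (ω : Fin n → Fin k → X × Bool) : ℝ :=
  (∑ i, if predProp f (ω i) = labelProp (ω i) then (0 : ℝ) else 1) / (n : ℝ)

/-- Empirical proportional square loss. -/
def empSQ {X : Type*} {n k : ℕ} (f : X → Bool) (ω : Fin n → Fin k → X × Bool) : ℝ :=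
  (∑ i, (predProp f (ω i) - labelProp (ω i)) ^ 2) / (n : ℝ)

/-- The EasyLLP estimate of the 0-1 loss on a single bag, using marginal label
proportion `p`. -/
def ellEZ {X : Type*} {k : ℕ} (p : ℝ) (f : X → Bool) (bag : Fin k → X × Bool) : ℝ :=
  ((k : ℝ) * (labelProp bag - p) + p) * (1 - predProp f bag)
    + ((k : ℝ) * (p - labelProp bag) + (1 - p)) * predProp f bag

/-- Marginal label proportion `p = Pr[y = 1]`. -/
def labelP {X : Type*} [MeasurableSpace X] (D : Measure (X × Bool)) : ℝ :=
  (D {q | q.2 = true}).toReal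

end LLP

namespace LLP

/-- The offset EasyLLP loss on a single bag:
`g_f(B,α) = (k(2α − 2p) + (2p − 1))·((1/k)·Σ_j (f*(x_j) − f(x_j)))`. -/
def gOffset {X : Type*} {k : ℕ} (p : ℝ) (fs f : X → Bool) (bag : Fin k → X × Bool) : ℝ :=
  ((k : ℝ) * (2 * labelProp bag - 2 * p) + (2 * p - 1)) *
    ((∑ j, (bval (fs (bag j).1) - bval (f (bag j).1))) / (k : ℝ))


section Aux

variable {E : Type*} [MeasurableSpace E] (μ : Measure E) [IsProbabilityMeasure μ]

lemma integrable_of_bdd {φ : E → ℝ} (hm : Measurable φ) (C : ℝ) (hC : ∀ x, |φ x| ≤ C) :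
    Integrable φ μ :=
  ⟨hm.aestronglyMeasurable, HasFiniteIntegral.of_bounded (C := C)
    (Filter.Eventually.of_forall fun x => by simpa [Real.norm_eq_abs] using hC x)⟩

lemma integral_eval {k : ℕ} (φ : E → ℝ) (j : Fin k) :
    ∫ ω : Fin k → E, φ (ω j) ∂(Measure.pi fun _ => μ) = ∫ x, φ x ∂μ := by
  letI : MeasureSpace E := ⟨μ⟩
  haveI : SigmaFinite (volume : Measure E) := inferInstanceAs (SigmaFinite μ)
  have hvol : (Measure.pi fun _ : Fin k => μ) = (volume : Measure (Fin k → E)) := rfl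
  rw [hvol]
  have hpt : ∀ ω : Fin k → E,
      φ (ω j) = ∏ i, (if i = j then φ else fun _ => (1:ℝ)) (ω i) := by
    intro ω
    rw [Finset.prod_eq_single j (fun i _ hij => by simp [hij]) (by simp)]
    simp
  calc ∫ ω : Fin k → E, φ (ω j)
      = ∫ ω : Fin k → E, ∏ i, (if i = j then φ else fun _ => (1:ℝ)) (ω i) := by
        simp_rw [← hpt]
    _ = ∏ i, ∫ x, (if i = j then φ else fun _ => (1:ℝ)) x := by
        exact integral_fintype_prod_eq_prod _
    _ = ∫ x, φ x ∂μ := by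
        rw [Finset.prod_eq_single j (fun i _ hij => by simp [hij]) (by simp)]
        simp only [if_pos rfl]
        rfl

lemma integral_eval_mul {k : ℕ} (φ ψ : E → ℝ) {i j : Fin k} (hij : i ≠ j) :
    ∫ ω : Fin k → E, φ (ω i) * ψ (ω j) ∂(Measure.pi fun _ => μ)
      = (∫ x, φ x ∂μ) * ∫ x, ψ x ∂μ := by
  letI : MeasureSpace E := ⟨μ⟩
  haveI : SigmaFinite (volume : Measure E) := inferInstanceAs (SigmaFinite μ)
  have hvol : (Measure.pi fun _ : Fin k => μ) = (volume : Measure (Fin k → E)) := rfl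
  rw [hvol]
  set F : Fin k → E → ℝ := fun l => if l = i then φ else if l = j then ψ else fun _ => 1 with hF
  have hpt : ∀ ω : Fin k → E, φ (ω i) * ψ (ω j) = ∏ l, F l (ω l) := by
    intro ω
    rw [← Finset.mul_prod_erase univ (fun l => F l (ω l)) (mem_univ i),
      ← Finset.mul_prod_erase _ (fun l => F l (ω l))
        (by simp [Ne.symm hij, hij] : j ∈ (univ.erase i)),
      Finset.prod_eq_one]
    · simp [hF, hij, Ne.symm hij]
    · intro l hl
      simp only [Finset.mem_erase] at hl
      simp [hF, hl.1, hl.2.1]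
  calc ∫ ω : Fin k → E, φ (ω i) * ψ (ω j)
      = ∫ ω : Fin k → E, ∏ l, F l (ω l) := by simp_rw [← hpt]
    _ = ∏ l, ∫ x, F l x := integral_fintype_prod_eq_prod _
    _ = (∫ x, φ x ∂μ) * ∫ x, ψ x ∂μ := by
        rw [← Finset.mul_prod_erase univ (fun l => ∫ x, F l x) (mem_univ i),
          ← Finset.mul_prod_erase _ (fun l => ∫ x, F l x)
            (by simp [Ne.symm hij, hij] : j ∈ (univ.erase i)),
          Finset.prod_eq_one]
        · have h1 : (∫ (x : E), φ x) = ∫ x, φ x ∂μ := rfl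
          have h2 : (∫ (x : E), ψ x) = ∫ x, ψ x ∂μ := rfl
          simp [hF, Ne.symm hij, h1, h2]
        · intro l hl
          simp only [Finset.mem_erase] at hl
          simp [hF, hl.1, hl.2.1]

lemma integral_ite_mem {s : Set E} [∀ x, Decidable (x ∈ s)] (hs : MeasurableSet s) :
    ∫ x, (if x ∈ s then (1:ℝ) else 0) ∂μ = (μ s).toReal := by
  rw [← measureReal_def, ← integral_indicator_one hs]
  congr 1
  ext x
  by_cases h : x ∈ s <;> simp [h]

end Aux

/-- Real value of the label coordinate. -/
def yv {X : Type*} (q : X × Bool) : ℝ := bval q.2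

/-- Difference of predictions of `fs` and `f`. -/
def dv {X : Type*} (fs f : X → Bool) (q : X × Bool) : ℝ := bval (fs q.1) - bval (f q.1)

lemma bval_nonneg (b : Bool) : 0 ≤ bval b := by cases b <;> simp [bval]
lemma bval_le_one (b : Bool) : bval b ≤ 1 := by cases b <;> simp [bval]

lemma abs_dv_le_one {X : Type*} (fs f : X → Bool) (q : X × Bool) : |dv fs f q| ≤ 1 := by
  rcases q with ⟨x, b⟩
  cases hb : fs x <;> cases hc : f x <;> simp [dv, bval, hb, hc]

lemma pointwise_key {X : Type*} (fs f : X → Bool) (q : X × Bool) :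
    (2 * yv q - 1) * dv fs f q =
      (if f q.1 ≠ q.2 then (1:ℝ) else 0) - (if fs q.1 ≠ q.2 then (1:ℝ) else 0) := by
  rcases q with ⟨x, b⟩
  cases hb : fs x <;> cases hc : f x <;> cases b <;>
    simp [yv, dv, bval, hb, hc] <;> norm_num

lemma abs_dv_eq {X : Type*} (fs f : X → Bool) (q : X × Bool) :
    |dv fs f q| = if fs q.1 ≠ f q.1 then (1:ℝ) else 0 := by
  rcases q with ⟨x, b⟩
  cases hb : fs x <;> cases hc : f x <;> simp [dv, bval, hb, hc]


set_option maxHeartbeats 1000000 in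
/-- Lemma 3, variance-expectation bound for the offset EasyLLP loss
class. If `f* ∈ F` minimizes the classification loss over `F`, then for every `f ∈ F`,
over a bag of `k ≥ 1` i.i.d. draws: `E[g_f] = L(f) − L(f*) ≥ 0` and
`E[g_f²] ≤ 8·k²·L(f*) + 4·k²·E[g_f]`. -/
theorem offset_class_variance_expectation
    (X : Type*) [MeasurableSpace X] (D : Measure (X × Bool)) [IsProbabilityMeasure D]
    (F : Set (X → Bool)) (fs : X → Bool) (hfsF : fs ∈ F) (hfsm : Measurable fs)
    (hfsopt : err D fs = sInf (err D '' F))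
    (k : ℕ) (hk : 1 ≤ k)
    (f : X → Bool) (hfF : f ∈ F) (hfm : Measurable f) :
    (∫ bag, gOffset (labelP D) fs f bag ∂(Measure.pi fun _ : Fin k => D) =
        err D f - err D fs) ∧
      (0 ≤ ∫ bag, gOffset (labelP D) fs f bag ∂(Measure.pi fun _ : Fin k => D)) ∧
      (∫ bag, (gOffset (labelP D) fs f bag) ^ 2 ∂(Measure.pi fun _ : Fin k => D) ≤
        8 * (k : ℝ) ^ 2 * err D fs +
          4 * (k : ℝ) ^ 2 *
            ∫ bag, gOffset (labelP D) fs f bag ∂(Measure.pi fun _ : Fin k => D)) := by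
  classical
  set p : ℝ := labelP D with hp
  set μk : Measure (Fin k → X × Bool) := Measure.pi fun _ : Fin k => D with hμk
  haveI : IsProbabilityMeasure μk := by rw [hμk]; infer_instance
  have hk1 : (1:ℝ) ≤ (k:ℝ) := by exact_mod_cast hk
  have hkpos : (0:ℝ) < (k:ℝ) := lt_of_lt_of_le one_pos hk1
  have hk0 : (k:ℝ) ≠ 0 := ne_of_gt hkpos
  -- basic measurability
  have hyvm : Measurable (yv (X := X)) := (measurable_of_countable bval).comp measurable_snd
  have hdvm : Measurable (dv fs f) :=
    ((measurable_of_countable bval).comp (hfsm.comp measurable_fst)).sub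
      ((measurable_of_countable bval).comp (hfm.comp measurable_fst))
  -- measurable sets
  have hsE : MeasurableSet {q : X × Bool | f q.1 ≠ q.2} := by
    have : {q : X × Bool | f q.1 ≠ q.2}
        = (fun q : X × Bool => (f q.1, q.2)) ⁻¹' {r : Bool × Bool | r.1 ≠ r.2} := rfl
    rw [this]
    exact ((hfm.comp measurable_fst).prodMk measurable_snd) (Set.toFinite _).measurableSet
  have hsS : MeasurableSet {q : X × Bool | fs q.1 ≠ q.2} := by
    have : {q : X × Bool | fs q.1 ≠ q.2}
        = (fun q : X × Bool => (fs q.1, q.2)) ⁻¹' {r : Bool × Bool | r.1 ≠ r.2} := rfl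
    rw [this]
    exact ((hfsm.comp measurable_fst).prodMk measurable_snd) (Set.toFinite _).measurableSet
  have hsD : MeasurableSet {q : X × Bool | fs q.1 ≠ f q.1} := by
    have : {q : X × Bool | fs q.1 ≠ f q.1}
        = (fun q : X × Bool => (fs q.1, f q.1)) ⁻¹' {r : Bool × Bool | r.1 ≠ r.2} := rfl
    rw [this]
    exact ((hfsm.comp measurable_fst).prodMk (hfm.comp measurable_fst))
      (Set.toFinite _).measurableSet
  have hp0 : 0 ≤ p := ENNReal.toReal_nonneg
  have hp1 : p ≤ 1 := by
    rw [hp]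
    unfold labelP
    exact ENNReal.toReal_le_of_le_ofReal one_pos.le (by simpa using prob_le_one)
  -- integral of yv
  have hIy : ∫ q, yv q ∂D = p := by
    have h1 : ∀ q : X × Bool, yv q = if q ∈ {r : X × Bool | r.2 = true} then (1:ℝ) else 0 := by
      rintro ⟨x, b⟩; cases b <;> simp [yv, bval]
    have h2 : MeasurableSet {r : X × Bool | r.2 = true} :=
      measurable_snd (by exact (Set.toFinite _).measurableSet : MeasurableSet {b : Bool | b = true})
    simp_rw [h1]
    rw [integral_ite_mem D h2]
    rfl
  set φ1 : X × Bool → ℝ := fun q => 2 * yv q - 2 * p with hφ1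
  have hφ1m : Measurable φ1 := (hyvm.const_mul 2).sub measurable_const
  have hφ1b : ∀ q, |φ1 q| ≤ 4 := by
    intro q
    have h1 := bval_nonneg q.2
    have h2 := bval_le_one q.2
    rw [hφ1]
    simp only [yv] at *
    rw [abs_le]
    constructor <;> nlinarith
  have hdvb : ∀ q, |dv fs f q| ≤ 1 := abs_dv_le_one fs f
  have hIφ1 : ∫ q, φ1 q ∂D = 0 := by
    rw [hφ1]
    rw [integral_sub ((integrable_of_bdd D hyvm 1 (by
      intro q; rw [abs_le]; exact ⟨by simp only [yv]; linarith [bval_nonneg q.2], bval_le_one q.2⟩)).const_mul 2) (integrable_const _)]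
    simp [integral_const_mul, hIy]
  -- integrability facts
  have hintdv : Integrable (dv fs f) D := integrable_of_bdd D hdvm 1 hdvb
  have hintφ1dv : Integrable (fun q => φ1 q * dv fs f q) D :=
    integrable_of_bdd D (hφ1m.mul hdvm) 4 (by
      intro q
      calc |φ1 q * dv fs f q| = |φ1 q| * |dv fs f q| := abs_mul _ _
        _ ≤ 4 * 1 := mul_le_mul (hφ1b q) (hdvb q) (abs_nonneg _) (by norm_num)
        _ = 4 := by norm_num)
  set c : ℝ := ∫ q, φ1 q * dv fs f q ∂D with hc
  -- pointwise expansion of gOffset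
  have hg : ∀ bag : Fin k → X × Bool, gOffset p fs f bag =
      ((∑ i, ∑ j, φ1 (bag i) * dv fs f (bag j)) + (2*p-1) * ∑ j, dv fs f (bag j)) / k := by
    intro bag
    have h1 : (∑ i, ∑ j, φ1 (bag i) * dv fs f (bag j))
        = (∑ i, φ1 (bag i)) * (∑ j, dv fs f (bag j)) := (Finset.sum_mul_sum _ _ _ _).symm
    have h2 : (∑ i, φ1 (bag i)) = 2 * (∑ i, yv (bag i)) - (k:ℝ) * (2*p) := by
      rw [hφ1]
      rw [Finset.sum_sub_distrib]
      simp [Finset.mul_sum, mul_comm]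
    rw [h1, h2]
    simp only [gOffset, labelProp, yv, dv]
    field_simp
  -- integrability over the bag measure
  have hmeval : ∀ (j : Fin k) {ψ : X × Bool → ℝ}, Measurable ψ →
      Measurable (fun ω : Fin k → X × Bool => ψ (ω j)) :=
    fun j ψ hψ => hψ.comp (measurable_pi_apply j)
  have hintdbl : ∀ i j : Fin k,
      Integrable (fun ω : Fin k → X × Bool => φ1 (ω i) * dv fs f (ω j)) μk := by
    intro i j
    refine integrable_of_bdd μk ((hmeval i hφ1m).mul (hmeval j hdvm)) 4 ?_
    intro ω
    calc |φ1 (ω i) * dv fs f (ω j)| = |φ1 (ω i)| * |dv fs f (ω j)| := abs_mul _ _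
      _ ≤ 4 * 1 := mul_le_mul (hφ1b _) (hdvb _) (abs_nonneg _) (by norm_num)
      _ = 4 := by norm_num
  have hintdveval : ∀ j : Fin k,
      Integrable (fun ω : Fin k → X × Bool => dv fs f (ω j)) μk :=
    fun j => integrable_of_bdd μk (hmeval j hdvm) 1 (fun ω => hdvb _)
  -- compute the double-sum integral
  have hdbl : ∫ ω, (∑ i, ∑ j, φ1 (ω i) * dv fs f (ω j)) ∂μk = (k:ℝ) * c := by
    rw [integral_finset_sum _ (fun i _ => integrable_finset_sum _ (fun j _ => hintdbl i j))]
    have hone : ∀ i : Fin k, ∫ ω, (∑ j, φ1 (ω i) * dv fs f (ω j)) ∂μk = c := by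
      intro i
      rw [integral_finset_sum _ (fun j _ => hintdbl i j)]
      rw [Finset.sum_eq_single i ?_ (by simp)]
      · rw [hμk]
        exact integral_eval D (fun q => φ1 q * dv fs f q) i
      · intro j _ hji
        rw [hμk, integral_eval_mul D φ1 (dv fs f) (Ne.symm hji), hIφ1, zero_mul]
    simp only [hone, Finset.sum_const, Finset.card_univ, Fintype.card_fin, nsmul_eq_mul]
  have hlin : ∫ ω, ((2*p-1) * ∑ j, dv fs f (ω j)) ∂μk
      = (2*p-1) * ((k:ℝ) * ∫ q, dv fs f q ∂D) := by
    rw [integral_const_mul, integral_finset_sum _ (fun j _ => hintdveval j)]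
    have : ∀ j : Fin k, ∫ ω, dv fs f (ω j) ∂μk = ∫ q, dv fs f q ∂D := by
      intro j; rw [hμk]; exact integral_eval D (dv fs f) j
    simp only [this, Finset.sum_const, Finset.card_univ, Fintype.card_fin, nsmul_eq_mul]
  -- the key expectation identity
  have key : ∫ bag, gOffset p fs f bag ∂μk = ∫ q, (2 * yv q - 1) * dv fs f q ∂D := by
    have hrhs : ∫ q, (2 * yv q - 1) * dv fs f q ∂D
        = c + (2*p-1) * ∫ q, dv fs f q ∂D := by
      rw [hc, ← integral_const_mul, ← integral_add hintφ1dv (hintdv.const_mul _)]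
      congr 1
      ext q
      rw [hφ1]
      ring
    simp_rw [hg]
    rw [integral_div, integral_add (integrable_finset_sum _
        (fun i _ => integrable_finset_sum _ (fun j _ => hintdbl i j)))
      ((integrable_finset_sum _ (fun j _ => hintdveval j)).const_mul _),
      hdbl, hlin, hrhs]
    field_simp
  -- relate to classification errors
  have herr : ∫ q, (2 * yv q - 1) * dv fs f q ∂D = err D f - err D fs := by
    have h1 : ∀ q : X × Bool, (2 * yv q - 1) * dv fs f q =
        (if q ∈ {r : X × Bool | f r.1 ≠ r.2} then (1:ℝ) else 0)
          - (if q ∈ {r : X × Bool | fs r.1 ≠ r.2} then (1:ℝ) else 0) := by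
      intro q
      rw [pointwise_key fs f q]
      by_cases h1 : f q.1 = q.2 <;> by_cases h2 : fs q.1 = q.2 <;>
        simp [h1, h2, Set.mem_setOf_eq]
    simp_rw [h1]
    have hintE : Integrable
        (fun q : X × Bool => if q ∈ {r : X × Bool | f r.1 ≠ r.2} then (1:ℝ) else 0) D :=
      integrable_of_bdd D (measurable_const.ite hsE measurable_const) 1
        (fun q => by split <;> simp)
    have hintS : Integrable
        (fun q : X × Bool => if q ∈ {r : X × Bool | fs r.1 ≠ r.2} then (1:ℝ) else 0) D :=
      integrable_of_bdd D (measurable_const.ite hsS measurable_const) 1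
        (fun q => by split <;> simp)
    rw [integral_sub hintE hintS, integral_ite_mem D hsE, integral_ite_mem D hsS]
    rfl
  have E1 : ∫ bag, gOffset p fs f bag ∂μk = err D f - err D fs := key.trans herr
  -- optimality gives nonnegativity
  have hbdd : BddBelow (err D '' F) := ⟨0, by
    rintro r ⟨g0, _, rfl⟩; exact ENNReal.toReal_nonneg⟩
  have hle : err D fs ≤ err D f := by
    rw [hfsopt]
    exact csInf_le hbdd ⟨f, hfF, rfl⟩
  refine ⟨E1, by rw [E1]; linarith, ?_⟩
  -- second moment bound
  have hSab : ∀ bag : Fin k → X × Bool, (∑ j, |dv fs f (bag j)|) ≤ (k:ℝ) := by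
    intro bag
    calc (∑ j, |dv fs f (bag j)|) ≤ ∑ _j : Fin k, (1:ℝ) :=
          Finset.sum_le_sum (fun j _ => hdvb _)
      _ = (k:ℝ) := by simp
  have hSa0 : ∀ bag : Fin k → X × Bool, 0 ≤ ∑ j, |dv fs f (bag j)| :=
    fun bag => Finset.sum_nonneg (fun j _ => abs_nonneg _)
  have hsq : ∀ bag : Fin k → X × Bool,
      (gOffset p fs f bag) ^ 2 ≤ 4 * (k:ℝ) * ∑ j, |dv fs f (bag j)| := by
    intro bag
    have hA : gOffset p fs f bag =
        (2 * (∑ j, yv (bag j)) - 2 * (k:ℝ) * p + (2*p-1)) * ((∑ j, dv fs f (bag j)) / k) := by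
      have e1 : (k:ℝ) * (2 * ((∑ j, bval ((bag j).2)) / (k:ℝ)) - 2*p)
          = 2 * (∑ j, bval ((bag j).2)) - 2*(k:ℝ)*p := by
        field_simp
      simp only [gOffset, labelProp, yv, dv]
      rw [e1]
    set Sy := ∑ j, yv (bag j) with hSy
    set Sd := ∑ j, dv fs f (bag j) with hSd
    set Sa := ∑ j, |dv fs f (bag j)| with hSa
    have hSy0 : 0 ≤ Sy := Finset.sum_nonneg (fun j _ => bval_nonneg _)
    have hSyk : Sy ≤ (k:ℝ) := by
      calc Sy ≤ ∑ _j : Fin k, (1:ℝ) := Finset.sum_le_sum (fun j _ => bval_le_one _)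
        _ = (k:ℝ) := by simp
    have hSdSa : |Sd| ≤ Sa := Finset.abs_sum_le_sum_abs _ _
    have hAb : (2 * Sy - 2 * (k:ℝ) * p + (2*p-1))^2 ≤ (2*(k:ℝ))^2 := by
      have hh1 : 0 ≤ ((k:ℝ) - 1) * (1 - p) := mul_nonneg (by linarith) (by linarith)
      have hh2 : 0 ≤ p * ((k:ℝ) - 1) := mul_nonneg hp0 (by linarith)
      have h1 : -(2*(k:ℝ)) ≤ 2 * Sy - 2 * (k:ℝ) * p + (2*p-1) := by nlinarith
      have h2 : 2 * Sy - 2 * (k:ℝ) * p + (2*p-1) ≤ 2*(k:ℝ) := by nlinarith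
      exact sq_le_sq' h1 h2
    have hSd2 : Sd^2 ≤ Sa * (k:ℝ) := by
      have q1 : Sd^2 ≤ Sa^2 := by nlinarith [hSdSa, abs_nonneg Sd, sq_abs Sd]
      have q2 : Sa^2 ≤ Sa * (k:ℝ) := by nlinarith [hSa0 bag, hSab bag]
      linarith
    rw [hA]
    have hk2 : (0:ℝ) < (k:ℝ)^2 := by positivity
    have he : ((2 * Sy - 2 * (k:ℝ) * p + (2*p-1)) * (Sd / k))^2
        = (2 * Sy - 2 * (k:ℝ) * p + (2*p-1))^2 * Sd^2 / (k:ℝ)^2 := by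
      field_simp
    rw [he, div_le_iff₀ hk2]
    have t1 : (2 * Sy - 2 * (k:ℝ) * p + (2*p-1))^2 * Sd^2 ≤ (2*(k:ℝ))^2 * Sd^2 :=
      mul_le_mul_of_nonneg_right hAb (sq_nonneg _)
    have t2 : (2*(k:ℝ))^2 * Sd^2 ≤ (2*(k:ℝ))^2 * (Sa * (k:ℝ)) :=
      mul_le_mul_of_nonneg_left hSd2 (by positivity)
    have t3 : (2*(k:ℝ))^2 * (Sa*(k:ℝ)) = 4*(k:ℝ)*Sa*(k:ℝ)^2 := by ring
    linarith
  -- measurability and integrability of gOffset and its square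
  have hgm : Measurable (fun bag : Fin k → X × Bool => gOffset p fs f bag) := by
    have hs1 : Measurable (fun bag : Fin k → X × Bool => ∑ j, bval ((bag j).2)) :=
      Finset.measurable_sum _ (fun j _ =>
        (measurable_of_countable bval).comp (measurable_snd.comp (measurable_pi_apply j)))
    have hs2 : Measurable (fun bag : Fin k → X × Bool =>
        ∑ j, (bval (fs (bag j).1) - bval (f (bag j).1))) :=
      Finset.measurable_sum _ (fun j _ =>
        ((measurable_of_countable bval).comp (hfsm.comp (measurable_fst.comp (measurable_pi_apply j)))).sub
          ((measurable_of_countable bval).comp (hfm.comp (measurable_fst.comp (measurable_pi_apply j)))))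
    simp only [gOffset, labelProp]
    exact ((((hs1.div_const _).const_mul 2).sub measurable_const).const_mul _ |>.add
        measurable_const).mul (hs2.div_const _)
  have hgb : ∀ bag : Fin k → X × Bool, |gOffset p fs f bag| ≤ 2 * (k:ℝ) := by
    intro bag
    have h1 := hsq bag
    have h2 := hSab bag
    have h3 : (gOffset p fs f bag)^2 ≤ (2*(k:ℝ))^2 := by nlinarith
    nlinarith [sq_abs (gOffset p fs f bag), abs_nonneg (gOffset p fs f bag),
      sq_nonneg (|gOffset p fs f bag| - 2*(k:ℝ))]
  have hintg2 : Integrable (fun bag => (gOffset p fs f bag)^2) μk := by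
    refine integrable_of_bdd μk (hgm.pow_const 2) ((2*(k:ℝ))^2) ?_
    intro bag
    rw [abs_le]
    constructor
    · nlinarith [sq_nonneg (gOffset p fs f bag), hkpos]
    · nlinarith [hgb bag, sq_abs (gOffset p fs f bag), abs_nonneg (gOffset p fs f bag)]
  have hintabs : ∀ j : Fin k,
      Integrable (fun ω : Fin k → X × Bool => |dv fs f (ω j)|) μk :=
    fun j => integrable_of_bdd μk (hmeval j hdvm).abs 1 (fun ω => by
      rw [abs_abs]; exact hdvb _)
  have hintRHS : Integrable (fun bag : Fin k → X × Bool =>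
      4 * (k:ℝ) * ∑ j, |dv fs f (bag j)|) μk :=
    (integrable_finset_sum _ (fun j _ => hintabs j)).const_mul _
  have hmono : ∫ bag, (gOffset p fs f bag)^2 ∂μk
      ≤ ∫ bag, 4 * (k:ℝ) * ∑ j, |dv fs f (bag j)| ∂μk :=
    integral_mono hintg2 hintRHS hsq
  have hIabs : ∫ q, |dv fs f q| ∂D = (D {r : X × Bool | fs r.1 ≠ f r.1}).toReal := by
    have h1 : ∀ q : X × Bool, |dv fs f q|
        = if q ∈ {r : X × Bool | fs r.1 ≠ f r.1} then (1:ℝ) else 0 := by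
      intro q
      rw [abs_dv_eq fs f q]
      by_cases h : fs q.1 = f q.1 <;> simp [h, Set.mem_setOf_eq]
    simp_rw [h1]
    exact integral_ite_mem D hsD
  have hRHSval : ∫ bag, 4 * (k:ℝ) * ∑ j, |dv fs f (bag j)| ∂μk
      = 4 * (k:ℝ)^2 * (D {r : X × Bool | fs r.1 ≠ f r.1}).toReal := by
    rw [integral_const_mul, integral_finset_sum _ (fun j _ => hintabs j)]
    have : ∀ j : Fin k, ∫ ω, |dv fs f (ω j)| ∂μk = ∫ q, |dv fs f q| ∂D := by
      intro j; rw [hμk]; exact integral_eval D (fun q => |dv fs f q|) j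
    simp only [this, Finset.sum_const, Finset.card_univ, Fintype.card_fin, nsmul_eq_mul, hIabs]
    ring
  have hsub : (D {r : X × Bool | fs r.1 ≠ f r.1}).toReal ≤ err D f + err D fs := by
    have hss : {r : X × Bool | fs r.1 ≠ f r.1}
        ⊆ {r : X × Bool | f r.1 ≠ r.2} ∪ {r : X × Bool | fs r.1 ≠ r.2} := by
      intro q hq
      by_cases h : f q.1 = q.2
      · right
        intro hcon
        exact hq (hcon.trans h.symm)
      · left
        exact h
    have h1 : D {r : X × Bool | fs r.1 ≠ f r.1}
        ≤ D {r : X × Bool | f r.1 ≠ r.2} + D {r : X × Bool | fs r.1 ≠ r.2} :=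
      (measure_mono hss).trans (measure_union_le _ _)
    have h2 := ENNReal.toReal_mono
      (ENNReal.add_ne_top.mpr ⟨measure_ne_top D _, measure_ne_top D _⟩) h1
    rw [ENNReal.toReal_add (measure_ne_top D _) (measure_ne_top D _)] at h2
    exact h2
  calc ∫ bag, (gOffset p fs f bag)^2 ∂μk
      ≤ 4 * (k:ℝ)^2 * (D {r : X × Bool | fs r.1 ≠ f r.1}).toReal := by
        rw [← hRHSval]; exact hmono
    _ ≤ 4 * (k:ℝ)^2 * (err D f + err D fs) := by
        have : (0:ℝ) ≤ 4 * (k:ℝ)^2 := by positivity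
        exact mul_le_mul_of_nonneg_left hsub this
    _ = 8 * (k:ℝ)^2 * err D fs + 4 * (k:ℝ)^2 * (err D f - err D fs) := by ring
    _ = 8 * (k:ℝ)^2 * err D fs + 4 * (k:ℝ)^2 * ∫ bag, gOffset p fs f bag ∂μk := by
        rw [E1]


end LLP
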